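/- Let L/K be a finite Galois extension of number fields with group G, and let D_L denote the group of fractional ideals of L. Then H¹(G, D_L) = 0. -/

import Mathlib

open UniqueFactorizationMonoid

namespace NoetherPG

variable {R : Type*} [CommRing R] [IsDedekindDomain R]

open Classical in
/-- multiplicity of the prime ideal `P` in the ideal `I`. -/
noncomputable def cnt (P I : Ideal R) : ℕ := (normalizedFactors I).count P

lemma cnt_mul {P I J : Ideal R} (hI : I ≠ 0) (hJ : J ≠ 0) :
    cnt P (I * J) = cnt P I + cnt P J := by
  classical
  simp only [cnt]
  rw [normalizedFactors_mul hI hJ, Multiset.count_add]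

lemma cnt_pow {P I : Ideal R} (n : ℕ) : cnt P (I ^ n) = n * cnt P I := by
  classical
  simp only [cnt]
  rw [normalizedFactors_pow, Multiset.count_nsmul]

lemma cnt_self {P : Ideal R} (hP : Prime P) : cnt P P = 1 := by
  classical
  simp only [cnt]
  rw [normalizedFactors_irreducible hP.irreducible, normalize_eq, Multiset.count_singleton_self]

lemma cnt_prime_ne {P Q : Ideal R} (hQ : Prime Q) (h : P ≠ Q) : cnt P Q = 0 := by
  classical
  simp only [cnt]
  rw [normalizedFactors_irreducible hQ.irreducible, normalize_eq, Multiset.count_singleton,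
    if_neg h]

lemma cnt_ext {I J : Ideal R} (hI : I ≠ 0) (hJ : J ≠ 0)
    (h : ∀ P : Ideal R, Prime P → cnt P I = cnt P J) : I = J := by
  classical
  have hfac : normalizedFactors I = normalizedFactors J := by
    ext a
    by_cases ha : Prime a
    · simpa [cnt] using h a ha
    · rw [Multiset.count_eq_zero.2 fun hmem => ha (prime_of_normalized_factor a hmem),
        Multiset.count_eq_zero.2 fun hmem => ha (prime_of_normalized_factor a hmem)]
  have h2 : Associated I J :=
    (prod_normalizedFactors hI).symm.trans (hfac ▸ prod_normalizedFactors hJ)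
  exact associated_iff_eq.mp h2

lemma cnt_spec {P I : Ideal R} (hP : Prime P) (hI : I ≠ 0) :
    P ^ cnt P I ∣ I ∧ ¬ P ^ (cnt P I + 1) ∣ I := by
  classical
  have h := emultiplicity_eq_count_normalizedFactors hP.irreducible hI
  rw [normalize_eq] at h
  have h' : emultiplicity P I = (cnt P I : ℕ∞) := by
    rw [h]; norm_cast
  exact emultiplicity_eq_coe.mp h'

lemma cnt_support_finite {I : Ideal R} :
    {P : Ideal R | cnt P I ≠ 0}.Finite := by
  classical
  apply Set.Finite.subset (normalizedFactors I).finite_toSet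
  intro P hP
  simp only [Set.mem_setOf_eq, cnt] at hP ⊢
  exact Multiset.count_pos.mp (Nat.pos_of_ne_zero (by convert hP)) 

end NoetherPG

namespace NoetherPG

variable {R : Type*} [CommRing R] [IsDedekindDomain R]

lemma cnt_eq_of {P I : Ideal R} (hP : Prime P) {n : ℕ}
    (hle : P ^ n ∣ I) (hlt : ¬ P ^ (n + 1) ∣ I) : cnt P I = n := by
  classical
  have := count_normalizedFactors_eq hP.irreducible (normalize_eq _) hle hlt
  simpa [cnt] using this

variable (e : R ≃+* R)

lemma map_le_map_iff {I J : Ideal R} : Ideal.map e I ≤ Ideal.map e J ↔ I ≤ J := by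
  rw [Ideal.map_le_iff_le_comap, Ideal.comap_map_of_bijective e e.bijective]

lemma map_dvd_map_iff {I J : Ideal R} : Ideal.map e I ∣ Ideal.map e J ↔ I ∣ J := by
  rw [Ideal.dvd_iff_le, Ideal.dvd_iff_le, map_le_map_iff]

lemma map_eq_zero_iff {I : Ideal R} : Ideal.map e I = 0 ↔ I = 0 := by
  rw [Submodule.zero_eq_bot]
  exact Ideal.map_eq_bot_iff_of_injective e.injective

lemma prime_map {P : Ideal R} (hP : Prime P) : Prime (Ideal.map e P) := by
  have h1 : P.IsPrime := Ideal.isPrime_of_prime hP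
  have h2 : (Ideal.map e P).IsPrime := Ideal.map_isPrime_of_equiv e
  have h3 : Ideal.map e P ≠ ⊥ := by
    intro hbot
    exact hP.ne_zero ((map_eq_zero_iff e).mp (by rw [hbot, Submodule.zero_eq_bot]))
  exact (Ideal.prime_iff_isPrime h3).mpr h2

lemma cnt_map {P I : Ideal R} (hP : Prime P) (hI : I ≠ 0) :
    cnt (Ideal.map e P) (Ideal.map e I) = cnt P I := by
  obtain ⟨hle, hlt⟩ := cnt_spec hP hI
  refine cnt_eq_of (prime_map e hP) ?_ ?_
  · rw [← Ideal.map_pow, map_dvd_map_iff]; exact hle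
  · rw [← Ideal.map_pow, map_dvd_map_iff]; exact hlt

end NoetherPG

namespace NoetherPG

variable {R : Type*} [CommRing R] [IsDedekindDomain R]

lemma cnt_one {P : Ideal R} : cnt P (1 : Ideal R) = 0 := by
  classical
  simp only [cnt, normalizedFactors_one, Multiset.count_zero]

lemma map_coe (e : RingAut R) (I : Ideal R) :
    Ideal.map e I = Ideal.map (e : R →+* R) I := rfl

lemma map_aut_one (P : Ideal R) : Ideal.map (1 : RingAut R) P = P := by
  rw [map_coe]
  have : ((1 : RingAut R) : R →+* R) = RingHom.id R := by ext x; rfl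
  rw [this, Ideal.map_id]

lemma map_aut_mul (f g : RingAut R) (P : Ideal R) :
    Ideal.map (f * g : RingAut R) P = Ideal.map f (Ideal.map g P) := by
  rw [map_coe, map_coe, map_coe, Ideal.map_map]
  congr 1

open Classical in
lemma cnt_finset_prod (S : Finset (Ideal R)) (g : Ideal R → ℕ)
    (hSp : ∀ P ∈ S, Prime P) {Q : Ideal R} (hQ : Prime Q) :
    cnt Q (∏ P ∈ S, P ^ g P) = if Q ∈ S then g Q else 0 := by
  classical
  induction S using Finset.induction with
  | empty =>
    simp only [Finset.prod_empty, Finset.notMem_empty, if_false, cnt_one]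
  | @insert a s hx ih =>
    have ha : Prime a := hSp a (Finset.mem_insert_self a s)
    have hs : ∀ P ∈ s, Prime P := fun P hP => hSp P (Finset.mem_insert_of_mem hP)
    have hprod : (∏ P ∈ s, P ^ g P) ≠ 0 :=
      Finset.prod_ne_zero_iff.mpr fun P hP => pow_ne_zero _ (hs P hP).ne_zero
    rw [Finset.prod_insert hx, cnt_mul (pow_ne_zero _ ha.ne_zero) hprod, cnt_pow, ih hs]
    by_cases hQa : Q = a
    · subst hQa
      rw [cnt_self ha, if_neg hx, if_pos (Finset.mem_insert_self Q s)]
      ring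
    · rw [cnt_prime_ne ha hQa]
      by_cases hQs : Q ∈ s
      · rw [if_pos hQs, if_pos (Finset.mem_insert_of_mem hQs)]; ring
      · rw [if_neg hQs, if_neg (by simp [hQa, hQs])]; ring

variable {G : Type*} [Group G] (ρ : G →* RingAut R)

/-- the orbit equivalence relation on ideals under the action of `G` via `ρ`. -/
def orbitSetoid : Setoid (Ideal R) where
  r P Q := ∃ σ : G, Ideal.map (ρ σ) P = Q
  iseqv := by
    constructor
    · intro P
      exact ⟨1, by rw [map_one, map_aut_one]⟩
    · rintro P Q ⟨σ, rfl⟩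
      exact ⟨σ⁻¹, by rw [← map_aut_mul, ← map_mul, inv_mul_cancel, map_one, map_aut_one]⟩
    · rintro P Q T ⟨σ, rfl⟩ ⟨τ, rfl⟩
      exact ⟨τ * σ, by rw [map_mul, map_aut_mul]⟩

/-- a representative of the orbit of `P`. -/
noncomputable def rep (P : Ideal R) : Ideal R := (Quotient.mk (orbitSetoid ρ) P).out

/-- a group element carrying `rep P` to `P`. -/
noncomputable def tsl (P : Ideal R) : G := (Quotient.mk_out (s := orbitSetoid ρ) P).choose

lemma tsl_spec (P : Ideal R) : Ideal.map (ρ (tsl ρ P)) (rep ρ P) = P :=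
  (Quotient.mk_out (s := orbitSetoid ρ) P).choose_spec

lemma rep_map (σ : G) (P : Ideal R) : rep ρ (Ideal.map (ρ σ) P) = rep ρ P := by
  unfold rep
  congr 1
  exact Quotient.sound ((orbitSetoid ρ).symm ⟨σ, rfl⟩)

end NoetherPG

namespace NoetherPG

variable {R : Type*} [CommRing R] [IsDedekindDomain R]

theorem generic {G : Type*} [Group G] [Finite G] (ρ : G →* RingAut R)
    (A B : G → Ideal R) (hA : ∀ σ, A σ ≠ 0) (hB : ∀ σ, B σ ≠ 0)
    (hcocycle : ∀ σ τ : G,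
      A (σ * τ) * B σ * Ideal.map (ρ σ) (B τ) =
        B (σ * τ) * A σ * Ideal.map (ρ σ) (A τ)) :
    ∃ C D : Ideal R, C ≠ 0 ∧ D ≠ 0 ∧ ∀ σ : G,
      A σ * D * Ideal.map (ρ σ) C = B σ * C * Ideal.map (ρ σ) D := by
  classical
  -- the cocycle, valuation-wise
  set E : G → Ideal R → ℤ := fun σ P => (cnt P (A σ) : ℤ) - (cnt P (B σ) : ℤ) with hE
  have hmapne : ∀ (σ : G) (I : Ideal R), I ≠ 0 → Ideal.map (ρ σ) I ≠ 0 :=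
    fun σ I hI h => hI ((map_eq_zero_iff (ρ σ)).mp h)
  have hactinv : ∀ (σ : G) (I : Ideal R), Ideal.map (ρ σ) (Ideal.map (ρ σ⁻¹) I) = I :=
    fun σ I => by rw [← map_aut_mul, ← map_mul, mul_inv_cancel, map_one, map_aut_one]
  have hprimeact : ∀ (σ : G) (P : Ideal R), Prime P → Prime (Ideal.map (ρ σ) P) :=
    fun σ P hP => prime_map (ρ σ) hP
  have hcnt_map : ∀ (σ : G) (P I : Ideal R), Prime P → I ≠ 0 →
      cnt P (Ideal.map (ρ σ) I) = cnt (Ideal.map (ρ σ⁻¹) P) I := by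
    intro σ P I hP hI
    conv_lhs => rw [← hactinv σ P]
    exact cnt_map (ρ σ) (hprimeact σ⁻¹ P hP) hI
  -- cocycle identity for E
  have hcoc : ∀ (σ τ : G) (P : Ideal R), Prime P →
      E (σ * τ) P = E σ P + E τ (Ideal.map (ρ σ⁻¹) P) := by
    intro σ τ P hP
    have h := congrArg (cnt P) (hcocycle σ τ)
    rw [cnt_mul (mul_ne_zero (hA _) (hB _)) (hmapne _ _ (hB _)),
        cnt_mul (mul_ne_zero (hB _) (hA _)) (hmapne _ _ (hA _)),
        cnt_mul (hA _) (hB _), cnt_mul (hB _) (hA _),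
        hcnt_map σ P (B τ) hP (hB _), hcnt_map σ P (A τ) hP (hA _)] at h
    simp only [hE]
    push_cast
    omega
  have hE1 : ∀ P : Ideal R, Prime P → E 1 P = 0 := by
    intro P hP
    have h := hcoc 1 1 P hP
    rw [mul_one, inv_one, map_one, map_aut_one] at h
    omega
  -- E vanishes on stabilizers
  have hstab : ∀ (P : Ideal R), Prime P → ∀ g : G, Ideal.map (ρ g) P = P → E g P = 0 := by
    intro P hP g hg
    have hfix_inv : Ideal.map (ρ g⁻¹) P = P := by
      conv_lhs => rw [← hg]
      rw [← map_aut_mul, ← map_mul, inv_mul_cancel, map_one, map_aut_one]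
    have hpow : ∀ n : ℕ, E (g ^ n) P = n * E g P := by
      intro n
      induction n with
      | zero => simpa using hE1 P hP
      | succ n ih =>
        rw [pow_succ', hcoc g (g ^ n) P hP, hfix_inv, ih]
        push_cast
        ring
    have hn := hpow (Nat.card G)
    rw [pow_card_eq_one', hE1 P hP] at hn
    have hpos : (0 : ℤ) < Nat.card G := by exact_mod_cast Nat.card_pos
    nlinarith [hn]
  -- definition of the 0-cochain f
  set f : Ideal R → ℤ := fun P => E (tsl ρ P) P with hf
  have hwd : ∀ (P : Ideal R), Prime P → ∀ σ : G,
      Ideal.map (ρ σ) (rep ρ P) = P → E σ P = f P := by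
    intro P hP σ hσ
    have ht := tsl_spec ρ P
    have hrep_eq : rep ρ P = Ideal.map (ρ (tsl ρ P)⁻¹) P := by
      conv_lhs => rw [← map_aut_one (rep ρ P), ← map_one ρ, ← inv_mul_cancel (tsl ρ P),
        map_mul, map_aut_mul, ht]
    have hrep_prime : Prime (rep ρ P) := by
      rw [hrep_eq]; exact hprimeact _ _ hP
    have hfix : Ideal.map (ρ ((tsl ρ P)⁻¹ * σ)) (rep ρ P) = rep ρ P := by
      rw [map_mul, map_aut_mul, hσ, ← hrep_eq]
    have hdecomp : σ = tsl ρ P * ((tsl ρ P)⁻¹ * σ) := by group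
    have h1 : E σ P = E (tsl ρ P) P + E ((tsl ρ P)⁻¹ * σ) (Ideal.map (ρ (tsl ρ P)⁻¹) P) := by
      conv_lhs => rw [hdecomp]
      exact hcoc _ _ P hP
    rw [← hrep_eq, hstab _ hrep_prime _ hfix] at h1
    simpa [hf] using h1
  -- the coboundary identity
  have hmain : ∀ (σ : G) (P : Ideal R), Prime P →
      E σ P = f P - f (Ideal.map (ρ σ⁻¹) P) := by
    intro σ P hP
    set Q := Ideal.map (ρ σ⁻¹) P with hQdef
    have hQ : Prime Q := hprimeact _ _ hP
    have hrepQP : rep ρ Q = rep ρ P := by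
      rw [hQdef, rep_map]
    have ht := tsl_spec ρ Q
    have hcomp : Ideal.map (ρ (σ * tsl ρ Q)) (rep ρ P) = P := by
      rw [map_mul, map_aut_mul, ← hrepQP, ht, hQdef, hactinv]
    have h1 := hwd P hP _ hcomp
    rw [hcoc σ (tsl ρ Q) P hP] at h1
    have h2 : E (tsl ρ Q) Q = f Q := rfl
    rw [← hQdef] at h1
    omega
  -- finiteness of the support of f
  have hfin : {P : Ideal R | Prime P ∧ f P ≠ 0}.Finite := by
    apply Set.Finite.subset (Set.finite_iUnion (ι := G)
      (fun σ => (cnt_support_finite (I := A σ)).union (cnt_support_finite (I := B σ))))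
    rintro P ⟨hP, hfP⟩
    have : cnt P (A (tsl ρ P)) ≠ cnt P (B (tsl ρ P)) := by
      intro h
      apply hfP
      simp only [hf, hE]
      omega
    rcases Nat.lt_or_ge (cnt P (A (tsl ρ P))) (cnt P (B (tsl ρ P))) with h | h
    · exact Set.mem_iUnion.mpr ⟨tsl ρ P, Or.inr (by simp only [Set.mem_setOf_eq]; omega)⟩
    · exact Set.mem_iUnion.mpr ⟨tsl ρ P, Or.inl (by simp only [Set.mem_setOf_eq]; omega)⟩
  set S := hfin.toFinset with hS
  have hSmem : ∀ P : Ideal R, P ∈ S ↔ Prime P ∧ f P ≠ 0 := fun P => hfin.mem_toFinset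
  have hSprime : ∀ P ∈ S, Prime P := fun P hP => ((hSmem P).mp hP).1
  set C : Ideal R := ∏ P ∈ S, P ^ (f P).toNat with hC
  set D : Ideal R := ∏ P ∈ S, P ^ (-f P).toNat with hD
  have hC0 : C ≠ 0 :=
    Finset.prod_ne_zero_iff.mpr fun P hP => pow_ne_zero _ (hSprime P hP).ne_zero
  have hD0 : D ≠ 0 :=
    Finset.prod_ne_zero_iff.mpr fun P hP => pow_ne_zero _ (hSprime P hP).ne_zero
  have hkey : ∀ Q : Ideal R, Prime Q → (cnt Q C : ℤ) - (cnt Q D : ℤ) = f Q := by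
    intro Q hQ
    rw [hC, hD, cnt_finset_prod S _ hSprime hQ, cnt_finset_prod S _ hSprime hQ]
    by_cases hQS : Q ∈ S
    · rw [if_pos hQS, if_pos hQS]; omega
    · rw [if_neg hQS, if_neg hQS]
      have : f Q = 0 := by
        by_contra hne
        exact hQS ((hSmem Q).mpr ⟨hQ, hne⟩)
      omega
  refine ⟨C, D, hC0, hD0, fun σ => ?_⟩
  apply cnt_ext (mul_ne_zero (mul_ne_zero (hA σ) hD0) (hmapne _ _ hC0))
    (mul_ne_zero (mul_ne_zero (hB σ) hC0) (hmapne _ _ hD0))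
  intro P hP
  have hQ : Prime (Ideal.map (ρ σ⁻¹) P) := hprimeact _ _ hP
  rw [cnt_mul (mul_ne_zero (hA σ) hD0) (hmapne _ _ hC0),
      cnt_mul (mul_ne_zero (hB σ) hC0) (hmapne _ _ hD0),
      cnt_mul (hA σ) hD0, cnt_mul (hB σ) hC0,
      hcnt_map σ P C hP hC0, hcnt_map σ P D hP hD0]
  have h1 := hmain σ P hP
  have h2 := hkey P hP
  have h3 := hkey (Ideal.map (ρ σ⁻¹) P) hQ
  simp only [hE] at h1
  omega

end NoetherPG



open NumberField

/-- Noether's "principal genus theorem for ideals": for a finite Galois extension `L/K` of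
number fields with group `G`, `H¹(G, D_L) = 0`, where `D_L` is the group of nonzero
fractional ideals of `L`.  Stated concretely: every fractional ideal is a quotient `A/B` of
nonzero integral ideals, so a 1-cocycle `c : G → D_L`, `c(στ) = c(σ)·σ(c(τ))`, is given by
pairs `(A σ, B σ)` satisfying the cross-multiplied cocycle identity, and the claim is that
it is a coboundary `c(σ) = (C/D)·σ(C/D)⁻¹` for nonzero integral ideals `C, D`. -/
theorem noether_principal_genus_for_ideals
    (K L : Type*) [Field K] [Field L] [NumberField K] [NumberField L]
    [Algebra K L] [IsGalois K L]
    (A B : (L ≃ₐ[K] L) → Ideal (𝓞 L))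
    (hA : ∀ σ, A σ ≠ 0) (hB : ∀ σ, B σ ≠ 0)
    (hcocycle : ∀ σ τ : L ≃ₐ[K] L,
      A (σ * τ) * B σ * Ideal.map (galRestrict (𝓞 K) K L (𝓞 L) σ) (B τ) =
        B (σ * τ) * A σ * Ideal.map (galRestrict (𝓞 K) K L (𝓞 L) σ) (A τ)) :
    ∃ C D : Ideal (𝓞 L), C ≠ 0 ∧ D ≠ 0 ∧ ∀ σ : L ≃ₐ[K] L,
      A σ * D * Ideal.map (galRestrict (𝓞 K) K L (𝓞 L) σ) C =
        B σ * C * Ideal.map (galRestrict (𝓞 K) K L (𝓞 L) σ) D := by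
  have hfd : FiniteDimensional K L := FiniteDimensional.right ℚ K L
  have hfin : Finite (L ≃ₐ[K] L) := inferInstance
  let ρ : (L ≃ₐ[K] L) →* RingAut (𝓞 L) :=
    { toFun := fun σ => (galRestrict (𝓞 K) K L (𝓞 L) σ).toRingEquiv
      map_one' := by ext x; simp
      map_mul' := fun σ τ => by ext x; simp }
  have hmapeq : ∀ (σ : L ≃ₐ[K] L) (I : Ideal (𝓞 L)),
      Ideal.map (galRestrict (𝓞 K) K L (𝓞 L) σ) I = Ideal.map (ρ σ) I := fun _ _ => rfl
  simp only [hmapeq] at hcocycle ⊢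
  exact NoetherPG.generic ρ A B hA hB hcocycle
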